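/- Let S : [0,∞) → [0,∞) be nondecreasing with S(0) ≥ 0, and define for measurable matrix-valued v the operator (Vv)(ξ,η) = −(1/4) ∫₀^ξ ∫_ξ^η q((η₁−ξ₁)/2) v(ξ₁,η₁) dη₁ dξ₁, where S(η) = (1/2)∫₀^{η/2} ‖q(s)‖ ds. If v₀ satisfies ‖v₀(ξ,η)‖ ≤ S(η) for all 0 ≤ ξ ≤ η, then for every n ≥ 0, ‖(Vⁿ v₀)(ξ,η)‖ ≤ S(η)^{n+1} ξⁿ / n!. -/

import Mathlib

set_option maxHeartbeats 1000000
set_option synthInstance.maxHeartbeats 400000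

open MeasureTheory Set

abbrev MatC (n : ℕ) := EuclideanSpace ℂ (Fin n) →L[ℂ] EuclideanSpace ℂ (Fin n)

/-- `S(η) = (1/2)∫₀^{η/2} ‖q(s)‖ ds`. -/
noncomputable def Sfun (n : ℕ) (q : ℝ → MatC n) (η : ℝ) : ℝ :=
  (1 / 2) * ∫ s in (0:ℝ)..(η / 2), ‖q s‖

/-- The Volterra-type operator
`(Vv)(ξ,η) = −(1/4) ∫₀^ξ ∫_ξ^η q((η₁−ξ₁)/2) v(ξ₁,η₁) dη₁ dξ₁`. -/
noncomputable def Vop (n : ℕ) (q : ℝ → MatC n) (v : ℝ → ℝ → MatC n) :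
    ℝ → ℝ → MatC n :=
  fun ξ η => -((1 / 4 : ℂ) • ∫ ξ₁ in (0:ℝ)..ξ, ∫ η₁ in ξ..η, q ((η₁ - ξ₁) / 2) * v ξ₁ η₁)

/-- Integrability of the shifted-scaled kernel norm. -/
lemma aux_integrable (n : ℕ) (q : ℝ → MatC n)
    (hq : LocallyIntegrableOn q (Ici (0 : ℝ))) {ξ₁ η : ℝ}
    (h0 : 0 ≤ ξ₁) (h1 : ξ₁ ≤ η) :
    IntervalIntegrable (fun x => ‖q ((x - ξ₁) / 2)‖) volume ξ₁ η := by
  have h0η : (0:ℝ) ≤ η := h0.trans h1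
  have hqI : IntervalIntegrable q volume 0 (η / 2) := by
    have : IntegrableOn q (Icc (0:ℝ) (η / 2)) volume :=
      hq.integrableOn_compact_subset (Icc_subset_Ici_self) isCompact_Icc
    exact (this.mono_set (by rw [uIcc_of_le (by linarith)])).intervalIntegrable
  have h2 : IntervalIntegrable (fun x => ‖q x‖) volume 0 ((η - ξ₁) / 2) := by
    refine (hqI.norm.mono_set ?_)
    rw [uIcc_of_le (by linarith), uIcc_of_le (by linarith)]
    exact Icc_subset_Icc le_rfl (by linarith)
  have h4 := (h2.comp_mul_right (c := 1/2)).comp_sub_right ξ₁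
  have e1 : (0:ℝ) / (1/2) + ξ₁ = ξ₁ := by norm_num
  have e2 : ((η - ξ₁) / 2) / (1/2) + ξ₁ = η := by ring
  rw [e1, e2] at h4
  simp only [mul_one_div] at h4
  exact h4

/-- The kernel integral bound: `∫_ξ^η ‖q((x-ξ₁)/2)‖ dx ≤ 4 S(η)`. -/
lemma aux_kernel_bound (n : ℕ) (q : ℝ → MatC n)
    (hq : LocallyIntegrableOn q (Ici (0 : ℝ)))
    (hS : MonotoneOn (Sfun n q) (Ici (0 : ℝ))) {ξ₁ ξ η : ℝ}
    (h0 : 0 ≤ ξ₁) (h1 : ξ₁ ≤ ξ) (h2 : ξ ≤ η) :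
    (∫ x in ξ..η, ‖q ((x - ξ₁) / 2)‖) ≤ 4 * Sfun n q η := by
  have h0η : (0:ℝ) ≤ η := h0.trans (h1.trans h2)
  have hint := aux_integrable n q hq h0 (h1.trans h2)
  have step1 : (∫ x in ξ..η, ‖q ((x - ξ₁) / 2)‖) ≤ ∫ x in ξ₁..η, ‖q ((x - ξ₁) / 2)‖ := by
    refine intervalIntegral.integral_mono_interval h1 h2 le_rfl ?_ hint
    exact Filter.Eventually.of_forall fun x => norm_nonneg _
  have step2 : (∫ x in ξ₁..η, ‖q ((x - ξ₁) / 2)‖)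
      = ∫ x in (0:ℝ)..(η - ξ₁), ‖q (x / 2)‖ := by
    have := intervalIntegral.integral_comp_sub_right (a := ξ₁) (b := η)
      (fun x => ‖q (x / 2)‖) ξ₁
    rw [sub_self] at this
    exact this
  have step3 : (∫ x in (0:ℝ)..(η - ξ₁), ‖q (x / 2)‖)
      = 2 * ∫ x in (0:ℝ)..((η - ξ₁) / 2), ‖q x‖ := by
    rw [intervalIntegral.integral_comp_div (fun x => ‖q x‖) two_ne_zero, smul_eq_mul,
      zero_div]
  have step4 : 2 * (∫ x in (0:ℝ)..((η - ξ₁) / 2), ‖q x‖) = 4 * Sfun n q (η - ξ₁) := by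
    rw [Sfun]; ring
  have step5 : Sfun n q (η - ξ₁) ≤ Sfun n q η :=
    hS (mem_Ici.mpr (by linarith)) (mem_Ici.mpr h0η) (by linarith)
  calc (∫ x in ξ..η, ‖q ((x - ξ₁) / 2)‖) ≤ ∫ x in ξ₁..η, ‖q ((x - ξ₁) / 2)‖ := step1
    _ = 2 * ∫ x in (0:ℝ)..((η - ξ₁) / 2), ‖q x‖ := by rw [step2, step3]
    _ = 4 * Sfun n q (η - ξ₁) := step4
    _ ≤ 4 * Sfun n q η := by linarith

/-- If `‖v₀(ξ,η)‖ ≤ S(η)` on the triangle `0 ≤ ξ ≤ η`, then for every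
`m ≥ 0` one has `‖(Vᵐ v₀)(ξ,η)‖ ≤ S(η)^{m+1} ξᵐ / m!`. -/
theorem stmt4 (n : ℕ) (q : ℝ → MatC n)
    (hq : LocallyIntegrableOn q (Ici (0 : ℝ)))
    (hS : MonotoneOn (Sfun n q) (Ici (0 : ℝ))) (hS0 : 0 ≤ Sfun n q 0)
    (v₀ : ℝ → ℝ → MatC n)
    (hv₀ : ∀ ξ η : ℝ, 0 ≤ ξ → ξ ≤ η → ‖v₀ ξ η‖ ≤ Sfun n q η) :
    ∀ (m : ℕ) (ξ η : ℝ), 0 ≤ ξ → ξ ≤ η →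
      ‖((Vop n q)^[m] v₀) ξ η‖ ≤ Sfun n q η ^ (m + 1) * ξ ^ m / m.factorial := by
  have hSnn : ∀ {η : ℝ}, 0 ≤ η → 0 ≤ Sfun n q η := fun {η} hη =>
    hS0.trans (hS (mem_Ici.mpr le_rfl) (mem_Ici.mpr hη) hη)
  intro m
  induction m with
  | zero =>
    intro ξ η hξ hξη
    simpa using hv₀ ξ η hξ hξη
  | succ m ih =>
    intro ξ η hξ hξη
    have hη : (0:ℝ) ≤ η := hξ.trans hξη
    have hSη : 0 ≤ Sfun n q η := hSnn hη
    rw [Function.iterate_succ_apply']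
    set w := (Vop n q)^[m] v₀ with hw
    show ‖Vop n q w ξ η‖ ≤ _
    rw [Vop]
    have hnorm : ‖-((1 / 4 : ℂ) • ∫ ξ₁ in (0:ℝ)..ξ, ∫ η₁ in ξ..η, q ((η₁ - ξ₁) / 2) * w ξ₁ η₁)‖
        = (1/4) * ‖∫ ξ₁ in (0:ℝ)..ξ, ∫ η₁ in ξ..η, q ((η₁ - ξ₁) / 2) * w ξ₁ η₁‖ := by
      rw [norm_neg, norm_smul (α := ℂ) (β := MatC n) (1/4 : ℂ) _, norm_div, norm_one]
      norm_num
    rw [hnorm]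
    -- inner bound for ξ₁ ∈ Ioc 0 ξ
    have inner_bound : ∀ ξ₁ ∈ uIoc (0:ℝ) ξ,
        ‖∫ η₁ in ξ..η, q ((η₁ - ξ₁) / 2) * w ξ₁ η₁‖
          ≤ 4 * Sfun n q η ^ (m + 2) * ξ₁ ^ m / m.factorial := by
      intro ξ₁ hξ₁
      rw [uIoc_of_le hξ] at hξ₁
      obtain ⟨hξ₁0, hξ₁ξ⟩ := hξ₁
      set M : ℝ := Sfun n q η ^ (m + 1) * ξ₁ ^ m / m.factorial with hM
      have hM0 : 0 ≤ M := by positivity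
      have hbint : IntervalIntegrable (fun η₁ => ‖q ((η₁ - ξ₁) / 2)‖ * M) volume ξ η := by
        refine ((aux_integrable n q hq hξ₁0.le (hξ₁ξ.trans hξη)).mono_set ?_).mul_const M
        rw [uIcc_of_le hξη, uIcc_of_le (hξ₁ξ.trans hξη)]
        exact Icc_subset_Icc hξ₁ξ le_rfl
      have hptwise : ∀ᵐ η₁ ∂(volume.restrict (uIoc ξ η)),
          ‖q ((η₁ - ξ₁) / 2) * w ξ₁ η₁‖ ≤ ‖q ((η₁ - ξ₁) / 2)‖ * M := by
        filter_upwards [ae_restrict_mem measurableSet_uIoc] with η₁ hη₁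
        rw [uIoc_of_le hξη] at hη₁
        obtain ⟨hη₁ξ, hη₁η⟩ := hη₁
        have hη₁0 : (0:ℝ) ≤ η₁ := hξ₁0.le.trans (hξ₁ξ.trans hη₁ξ.le)
        have hwb : ‖w ξ₁ η₁‖ ≤ M := by
          have h1 := ih ξ₁ η₁ hξ₁0.le (hξ₁ξ.trans hη₁ξ.le)
          refine h1.trans ?_
          rw [hM]
          gcongr
          · exact hSnn hη₁0
          · exact hS (mem_Ici.mpr hη₁0) (mem_Ici.mpr hη) hη₁η
        calc ‖q ((η₁ - ξ₁) / 2) * w ξ₁ η₁‖ ≤ ‖q ((η₁ - ξ₁) / 2)‖ * ‖w ξ₁ η₁‖ := norm_mul_le _ _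
          _ ≤ ‖q ((η₁ - ξ₁) / 2)‖ * M := mul_le_mul_of_nonneg_left hwb (norm_nonneg _)
      have hle := intervalIntegral.norm_integral_le_abs_of_norm_le hptwise hbint
      have heval : (∫ η₁ in ξ..η, ‖q ((η₁ - ξ₁) / 2)‖ * M)
          = (∫ η₁ in ξ..η, ‖q ((η₁ - ξ₁) / 2)‖) * M :=
        intervalIntegral.integral_mul_const M _
      have hnn : 0 ≤ ∫ η₁ in ξ..η, ‖q ((η₁ - ξ₁) / 2)‖ * M := by
        refine intervalIntegral.integral_nonneg hξη fun x _ => ?_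
        positivity
      rw [abs_of_nonneg hnn, heval] at hle
      refine hle.trans ?_
      have hker := aux_kernel_bound n q hq hS hξ₁0.le hξ₁ξ hξη
      calc (∫ η₁ in ξ..η, ‖q ((η₁ - ξ₁) / 2)‖) * M ≤ (4 * Sfun n q η) * M :=
            mul_le_mul_of_nonneg_right hker hM0
        _ = 4 * Sfun n q η ^ (m + 2) * ξ₁ ^ m / m.factorial := by
            rw [hM]; ring
    -- outer estimate
    have houter : ‖∫ ξ₁ in (0:ℝ)..ξ, ∫ η₁ in ξ..η, q ((η₁ - ξ₁) / 2) * w ξ₁ η₁‖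
        ≤ |∫ ξ₁ in (0:ℝ)..ξ, 4 * Sfun n q η ^ (m + 2) * ξ₁ ^ m / m.factorial| := by
      refine intervalIntegral.norm_integral_le_abs_of_norm_le ?_ ?_
      · filter_upwards [ae_restrict_mem measurableSet_uIoc] with ξ₁ hξ₁
        exact inner_bound ξ₁ hξ₁
      · exact ((continuous_const.mul (continuous_pow m)).div_const _).intervalIntegrable _ _
    have hcalc : (∫ ξ₁ in (0:ℝ)..ξ, 4 * Sfun n q η ^ (m + 2) * ξ₁ ^ m / m.factorial)
        = 4 * Sfun n q η ^ (m + 2) / m.factorial * (ξ ^ (m + 1) / (m + 1)) := by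
      have hrw : ∀ ξ₁ : ℝ, 4 * Sfun n q η ^ (m + 2) * ξ₁ ^ m / m.factorial
          = (4 * Sfun n q η ^ (m + 2) / m.factorial) * ξ₁ ^ m := fun ξ₁ => by ring
      simp_rw [hrw]
      rw [intervalIntegral.integral_const_mul, integral_pow, zero_pow (Nat.succ_ne_zero m)]
      ring
    have hnn2 : (0:ℝ) ≤ 4 * Sfun n q η ^ (m + 2) / m.factorial * (ξ ^ (m + 1) / (m + 1)) := by
      positivity
    rw [hcalc, abs_of_nonneg hnn2] at houter
    calc (1/4) * ‖∫ ξ₁ in (0:ℝ)..ξ, ∫ η₁ in ξ..η, q ((η₁ - ξ₁) / 2) * w ξ₁ η₁‖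
        ≤ (1/4) * (4 * Sfun n q η ^ (m + 2) / m.factorial * (ξ ^ (m + 1) / (m + 1))) := by
          linarith
      _ = Sfun n q η ^ (m + 1 + 1) * ξ ^ (m + 1) / (m + 1).factorial := by
          rw [Nat.factorial_succ]
          push_cast
          field_simp
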